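/- Let a0 < 0 be real and let a1 = a + ib, a2 = a − ib with a < 0 and b > 0. Then for every n ∈ ℕ, 1/((n−a0)(n−a1)(n−a2)) = ∫_0^1 t^n w(t) dt, where w(t) = (1/((a0−a)² + b²))·( t^{−a0−1} − (√((a0−a)²+b²)/b) · t^{−a−1} sin(b·log t + θ) ) and θ is the principal argument of a1 − a0. -/

import Mathlib

open MeasureTheory Real Complex

theorem moment_complex_roots (a0 a b : ℝ) (h0 : a0 < 0) (ha : a < 0) (hb : 0 < b)
    (θ : ℝ) (hθ : θ = Complex.arg ((a : ℂ) + b * Complex.I - a0)) (n : ℕ) :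
    (1 / (((n : ℂ) - a0) * ((n : ℂ) - ((a : ℂ) + b * Complex.I)) *
        ((n : ℂ) - ((a : ℂ) - b * Complex.I))) : ℂ) =
    ((∫ t in Set.Ioc (0 : ℝ) 1, t ^ (n : ℕ) *
      ((1 / ((a0 - a) ^ 2 + b ^ 2)) *
        (t ^ (-a0 - 1) -
         (Real.sqrt ((a0 - a) ^ 2 + b ^ 2) / b) * t ^ (-a - 1) *
           Real.sin (b * Real.log t + θ)))) : ℝ) := by
  have hnn : (0:ℝ) ≤ (n:ℝ) := n.cast_nonneg
  set D : ℝ := (a0 - a)^2 + b^2 with hD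
  clear_value D
  have hDpos : 0 < D := by rw [hD]; positivity
  have hn0 : (0:ℝ) < (n:ℝ) - a0 := by linarith
  have hna : (0:ℝ) < (n:ℝ) - a := by linarith
  set E : ℝ := ((n:ℝ) - a)^2 + b^2 with hE
  clear_value E
  have hEpos : 0 < E := by rw [hE]; positivity
  set c : ℝ := (n:ℝ) - a - 1 with hc
  clear_value c
  have hcgt : -1 < c := by rw [hc]; linarith
  set e0 : ℝ := (n:ℝ) - a0 - 1 with he0
  clear_value e0
  have he0gt : -1 < e0 := by rw [he0]; linarith
  set r : ℂ := (c : ℂ) + (b:ℂ) * Complex.I with hr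
  clear_value r
  have hrre : r.re = c := by rw [hr]; simp
  have hrim : r.im = b := by rw [hr]; simp
  have hr1re : (r+1).re = (n:ℝ) - a := by rw [Complex.add_re, hrre, Complex.one_re, hc]; ring
  have hr1im : (r+1).im = b := by rw [Complex.add_im, hrim, Complex.one_im, add_zero]
  have hr1ne : r + 1 ≠ 0 := by
    intro h
    have := congrArg Complex.re h
    rw [hr1re] at this; simp at this; linarith
  -- key pointwise formulas for cpow
  have key : ∀ t ∈ Set.Ioc (0:ℝ) 1,
      (((t:ℂ))^r).re = t ^ c * Real.cos (b * Real.log t) ∧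
      (((t:ℂ))^r).im = t ^ c * Real.sin (b * Real.log t) := by
    intro t ht
    have ht0 : (0:ℝ) < t := ht.1
    have hz : (t:ℂ) ≠ 0 := by exact_mod_cast ht0.ne'
    rw [Complex.cpow_def_of_ne_zero hz, ← Complex.ofReal_log ht0.le]
    have h1 : ((Real.log t : ℂ) * r).re = Real.log t * c := by rw [hr]; simp
    have h2 : ((Real.log t : ℂ) * r).im = Real.log t * b := by rw [hr]; simp
    rw [Complex.exp_re, Complex.exp_im, h1, h2,
      Real.rpow_def_of_pos ht0, mul_comm b (Real.log t)]
    exact ⟨rfl, rfl⟩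
  -- integrability
  have hIC : IntegrableOn (fun t : ℝ => ((t:ℂ))^r) (Set.Ioc (0:ℝ) 1) volume := by
    have := intervalIntegral.intervalIntegrable_cpow' (a := 0) (b := 1) (r := r)
      (by rw [hrre]; exact hcgt)
    rwa [intervalIntegrable_iff_integrableOn_Ioc_of_le zero_le_one] at this
  have hICre : IntegrableOn (fun t : ℝ => (((t:ℂ))^r).re) (Set.Ioc (0:ℝ) 1) volume := by
    exact hIC.re
  have hICim : IntegrableOn (fun t : ℝ => (((t:ℂ))^r).im) (Set.Ioc (0:ℝ) 1) volume := by
    exact hIC.im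
  have hfc : IntegrableOn (fun t : ℝ => t ^ c * Real.cos (b * Real.log t))
      (Set.Ioc (0:ℝ) 1) volume :=
    hICre.congr_fun (fun t ht => (key t ht).1) measurableSet_Ioc
  have hfs : IntegrableOn (fun t : ℝ => t ^ c * Real.sin (b * Real.log t))
      (Set.Ioc (0:ℝ) 1) volume :=
    hICim.congr_fun (fun t ht => (key t ht).2) measurableSet_Ioc
  have hf0 : IntegrableOn (fun t : ℝ => t ^ e0) (Set.Ioc (0:ℝ) 1) volume := by
    have := intervalIntegral.intervalIntegrable_rpow' (a := 0) (b := 1) he0gt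
    rwa [intervalIntegrable_iff_integrableOn_Ioc_of_le zero_le_one] at this
  -- value of complex integral
  have hICval : (∫ t in Set.Ioc (0:ℝ) 1, ((t:ℂ))^r) = 1 / (r + 1) := by
    rw [← intervalIntegral.integral_of_le zero_le_one,
      integral_cpow (Or.inl (by rw [hrre]; exact hcgt))]
    push_cast
    rw [Complex.one_cpow, Complex.zero_cpow hr1ne]
    ring
  have hnormSq : Complex.normSq (r+1) = E := by
    rw [Complex.normSq_apply, hr1re, hr1im, hE]; ring
  have hIcre : (∫ t in Set.Ioc (0:ℝ) 1, t ^ c * Real.cos (b * Real.log t))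
      = ((n:ℝ) - a) / E := by
    rw [setIntegral_congr_fun measurableSet_Ioc (fun t ht => ((key t ht).1).symm)]
    have h' := integral_re (μ := volume.restrict (Set.Ioc (0:ℝ) 1)) hIC
    simp only [RCLike.re_to_complex] at h'
    rw [h', hICval, one_div, Complex.inv_re, hr1re, hnormSq]
  have hIsim : (∫ t in Set.Ioc (0:ℝ) 1, t ^ c * Real.sin (b * Real.log t))
      = -b / E := by
    rw [setIntegral_congr_fun measurableSet_Ioc (fun t ht => ((key t ht).2).symm)]
    have h' := integral_im (μ := volume.restrict (Set.Ioc (0:ℝ) 1)) hIC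
    simp only [RCLike.im_to_complex] at h'
    rw [h', hICval, one_div, Complex.inv_im, hr1im, hnormSq]
  have he0n : e0 + 1 ≠ 0 := by rw [he0]; intro h; rw [show (n:ℝ) - a0 - 1 + 1 = (n:ℝ) - a0 by ring] at h; linarith
  have hI0 : (∫ t in Set.Ioc (0:ℝ) 1, t ^ e0) = 1 / ((n:ℝ) - a0) := by
    rw [← intervalIntegral.integral_of_le zero_le_one,
      integral_rpow (Or.inl he0gt)]
    rw [Real.one_rpow, Real.zero_rpow he0n, he0]
    norm_num
  -- cos θ, sin θ
  set z : ℂ := (a:ℂ) + (b:ℂ) * Complex.I - (a0:ℂ) with hz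
  clear_value z
  have hzre : z.re = a - a0 := by rw [hz]; simp
  have hzim : z.im = b := by rw [hz]; simp
  have hzne : z ≠ 0 := by
    intro h; have := congrArg Complex.im h; rw [hzim] at this; simp at this; linarith
  have habs : ‖z‖ = Real.sqrt D := by
    rw [Complex.norm_def, Complex.normSq_apply, hzre, hzim, hD]
    congr 1; ring
  have hcos : Real.cos θ = (a - a0) / Real.sqrt D := by
    rw [hθ, Complex.cos_arg hzne, hzre, habs]
  have hsin : Real.sin θ = b / Real.sqrt D := by
    rw [hθ, Complex.sin_arg, hzim, habs]
  have hsqD : Real.sqrt D ≠ 0 := (Real.sqrt_pos.mpr hDpos).ne'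
  -- rewrite the integrand
  have hEq : Set.EqOn
      (fun t : ℝ => t ^ (n : ℕ) *
        ((1 / D) * (t ^ (-a0 - 1) - (Real.sqrt D / b) * t ^ (-a - 1) *
          Real.sin (b * Real.log t + θ))))
      (fun t : ℝ => (1 / D) * t ^ e0 -
        (Real.sqrt D / (b * D)) * (Real.cos θ * (t ^ c * Real.sin (b * Real.log t)) +
          Real.sin θ * (t ^ c * Real.cos (b * Real.log t))))
      (Set.Ioc (0:ℝ) 1) := by
    intro t ht
    have ht0 : (0:ℝ) < t := ht.1
    have hpow : (t : ℝ) ^ (n : ℕ) = t ^ ((n:ℝ)) := (Real.rpow_natCast t n).symm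
    have e1 : t ^ ((n:ℝ)) * t ^ (-a0 - 1) = t ^ e0 := by
      rw [← Real.rpow_add ht0]; congr 1; rw [he0]; ring
    have e2 : t ^ ((n:ℝ)) * t ^ (-a - 1) = t ^ c := by
      rw [← Real.rpow_add ht0]; congr 1; rw [hc]; ring
    simp only
    rw [hpow, Real.sin_add]
    linear_combination (1/D) * e1 - (Real.sqrt D/(b*D)) * (Real.sin (b*Real.log t)*Real.cos θ
          + Real.cos (b*Real.log t)*Real.sin θ) * e2
  rw [setIntegral_congr_fun measurableSet_Ioc hEq]
  have h2i : IntegrableOn (fun t : ℝ =>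
      Real.cos θ * (t ^ c * Real.sin (b * Real.log t)) +
        Real.sin θ * (t ^ c * Real.cos (b * Real.log t))) (Set.Ioc (0:ℝ) 1) volume :=
    (hfs.const_mul _).add (hfc.const_mul _)
  rw [integral_sub (hf0.const_mul _) (h2i.const_mul _),
    integral_const_mul, integral_const_mul,
    integral_add (hfs.const_mul _) (hfc.const_mul _),
    integral_const_mul, integral_const_mul, hI0, hIcre, hIsim, hcos, hsin]
  -- pure algebra
  have hreal : (1 / D) * (1 / ((n:ℝ) - a0)) -
      (Real.sqrt D / (b * D)) * ((a - a0) / Real.sqrt D * (-b / E) +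
        b / Real.sqrt D * (((n:ℝ) - a) / E)) = 1 / (((n:ℝ) - a0) * E) := by
    rw [hD, hE]
    field_simp
    ring
  rw [hreal]
  have hden : ((n : ℂ) - a0) * ((n : ℂ) - ((a : ℂ) + b * Complex.I)) *
      ((n : ℂ) - ((a : ℂ) - b * Complex.I)) = ((((n:ℝ) - a0) * E : ℝ) : ℂ) := by
    rw [hE]
    push_cast
    linear_combination (-((n:ℂ) - a0) * (b:ℂ)^2) * Complex.I_sq
  rw [hden]
  norm_cast
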